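/- Let R > 0 and let u be harmonic on an open set U ⊆ ℝ² containing the closed quarter disk {(x, y) ∈ ℝ² : x ≥ 0, y ≥ 0, x² + y² ≤ R²}. Define Av(r) = ∫₀^{π/2} u(r cos θ, r sin θ) dθ. Then Av is differentiable on (0, R) and for every r ∈ (0, R), Av′(r) = (1/r) ∫₀^r ∂u/∂y (s, 0) ds + (1/r) ∫₀^r ∂u/∂x (0, s) ds. -/

import Mathlib

open MeasureTheory

noncomputable section

lemma hasDerivAt_param_integral {F F' : ℝ → ℝ → ℝ} {a b r ε C : ℝ} (hε : 0 < ε)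
    (hab : a ≤ b)
    (hcont : ∀ x ∈ Metric.ball r ε, ContinuousOn (F x) (Set.Icc a b))
    (hcont' : ContinuousOn (F' r) (Set.Icc a b))
    (hbound : ∀ x ∈ Metric.ball r ε, ∀ θ ∈ Set.Icc a b, |F' x θ| ≤ C)
    (hdiff : ∀ θ ∈ Set.Icc a b, ∀ x ∈ Metric.ball r ε, HasDerivAt (fun y => F y θ) (F' x θ) x) :
    HasDerivAt (fun x => ∫ θ in a..b, F x θ) (∫ θ in a..b, F' r θ) r := by
  have hI : Set.uIoc a b ⊆ Set.Icc a b := by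
    rw [Set.uIoc_of_le hab]; exact Set.Ioc_subset_Icc_self
  have hmeas : ∀ x ∈ Metric.ball r ε,
      AEStronglyMeasurable (F x) (volume.restrict (Set.uIoc a b)) := fun x hx =>
    ((hcont x hx).mono hI).aestronglyMeasurable measurableSet_uIoc
  have hrball : r ∈ Metric.ball r ε := Metric.mem_ball_self hε
  have hint : IntervalIntegrable (F r) volume a b := by
    apply ContinuousOn.intervalIntegrable
    rw [Set.uIcc_of_le hab]; exact hcont r hrball
  have := intervalIntegral.hasDerivAt_integral_of_dominated_loc_of_deriv_le
    (μ := volume) (F := F) (F' := F') (bound := fun _ => C) (Metric.ball_mem_nhds r hε)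
    (Filter.eventually_of_mem (Metric.ball_mem_nhds r hε) hmeas)
    hint
    ((hcont'.mono hI).aestronglyMeasurable measurableSet_uIoc)
    (Filter.Eventually.of_forall fun θ hθ x hx => by
      rw [Real.norm_eq_abs]; exact hbound x hx θ (hI hθ))
    intervalIntegrable_const
    (Filter.Eventually.of_forall fun θ hθ x hx => hdiff θ (hI hθ) x hx)
  exact this.2

lemma bilin_expand (B : (ℝ × ℝ) →L[ℝ] (ℝ × ℝ) →L[ℝ] ℝ) (a b x y : ℝ) :
    B (a, b) (x, y) = a * (x * B (1, 0) (1, 0) + y * B (1, 0) (0, 1))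
      + b * (x * B (0, 1) (1, 0) + y * B (0, 1) (0, 1)) := by
  have h1 : ∀ (p q : ℝ), ((p, q) : ℝ × ℝ) = p • ((1 : ℝ), (0 : ℝ)) + q • ((0 : ℝ), (1 : ℝ)) := by
    intro p q; simp [Prod.ext_iff]
  rw [h1 a b, h1 x y, map_add, _root_.map_smul, _root_.map_smul]
  simp only [ContinuousLinearMap.add_apply, ContinuousLinearMap.coe_smul',
    Pi.smul_apply, map_add, _root_.map_smul, smul_eq_mul]
  ring

lemma lin_expand (L : (ℝ × ℝ) →L[ℝ] ℝ) (a b : ℝ) :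
    L (a, b) = a * L (1, 0) + b * L (0, 1) := by
  have h1 : ((a, b) : ℝ × ℝ) = a • ((1 : ℝ), (0 : ℝ)) + b • ((0 : ℝ), (1 : ℝ)) := by
    simp [Prod.ext_iff]
  rw [h1, map_add, _root_.map_smul, _root_.map_smul, smul_eq_mul, smul_eq_mul]

lemma key_identity (B : (ℝ × ℝ) →L[ℝ] (ℝ × ℝ) →L[ℝ] ℝ) (L : (ℝ × ℝ) →L[ℝ] ℝ) (ρ c s : ℝ)
    (harm : B (1, 0) (1, 0) + B (0, 1) (0, 1) = 0) :
    B (ρ * -s, ρ * c) (-s, c) + L (-c, -s)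
      = -(L (c, s) + ρ * B (c, s) (c, s)) := by
  rw [bilin_expand B (ρ * -s) (ρ * c) (-s) c, bilin_expand B c s c s,
    lin_expand L (-c) (-s), lin_expand L c s]
  linear_combination (ρ * (s ^ 2 + c ^ 2)) * harm

/-- The Laplacian `∂²u/∂x² + ∂²u/∂y²` of a function `u : ℝ² → ℝ` at a point `p`. -/
def laplacian (u : ℝ × ℝ → ℝ) (p : ℝ × ℝ) : ℝ :=
  fderiv ℝ (fun q => fderiv ℝ u q (1, 0)) p (1, 0) +
  fderiv ℝ (fun q => fderiv ℝ u q (0, 1)) p (0, 1)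

/-- `u` is harmonic on an open set `U ⊆ ℝ²`: twice continuously differentiable with
vanishing Laplacian on `U`. -/
def HarmonicOn (u : ℝ × ℝ → ℝ) (U : Set (ℝ × ℝ)) : Prop :=
  ContDiffOn ℝ 2 u U ∧ ∀ p ∈ U, laplacian u p = 0

/-- The polar-coordinate point. -/
def Pt (ρ θ : ℝ) : ℝ × ℝ := (ρ * Real.cos θ, ρ * Real.sin θ)

/-- Radial derivative of `u` along the circle: integrand for `Av'`. -/
def Afun (u : ℝ × ℝ → ℝ) (ρ θ : ℝ) : ℝ := fderiv ℝ u (Pt ρ θ) (Real.cos θ, Real.sin θ)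

/-- Flux integrand. -/
def Wfun (u : ℝ × ℝ → ℝ) (ρ θ : ℝ) : ℝ := ρ * Afun u ρ θ

/-- Its ρ-derivative. -/
def W'fun (u : ℝ × ℝ → ℝ) (ρ θ : ℝ) : ℝ :=
  Afun u ρ θ + ρ * fderiv ℝ (fderiv ℝ u) (Pt ρ θ) (Real.cos θ, Real.sin θ)
    (Real.cos θ, Real.sin θ)

/-- The tangential field whose θ-derivative is `-W'fun`. -/
def hfun (u : ℝ × ℝ → ℝ) (ρ θ : ℝ) : ℝ := fderiv ℝ u (Pt ρ θ) (-Real.sin θ, Real.cos θ)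

/-- The flux through the arc of radius ρ. -/
def gfun (u : ℝ × ℝ → ℝ) (ρ : ℝ) : ℝ := ∫ θ in (0:ℝ)..(Real.pi / 2), Wfun u ρ θ

/-- Flux identity (equation (e:I_i')): for `u` harmonic on a neighborhood of the closed
quarter disk of radius `R`, the arc average `Av(r) = ∫₀^{π/2} u(r cos θ, r sin θ) dθ` is
differentiable on `(0, R)` with
`Av′(r) = (1/r)∫₀^r ∂u/∂y(s,0) ds + (1/r)∫₀^r ∂u/∂x(0,s) ds`. -/
theorem stmt10 (R : ℝ) (hR : 0 < R) (u : ℝ × ℝ → ℝ) (U : Set (ℝ × ℝ)) (hUopen : IsOpen U)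
    (hsub : {p : ℝ × ℝ | 0 ≤ p.1 ∧ 0 ≤ p.2 ∧ p.1 ^ 2 + p.2 ^ 2 ≤ R ^ 2} ⊆ U)
    (hu : HarmonicOn u U) :
    ∀ r ∈ Set.Ioo 0 R,
      HasDerivAt
        (fun r' : ℝ => ∫ θ in (0:ℝ)..(Real.pi / 2),
          u (r' * Real.cos θ, r' * Real.sin θ))
        ((1 / r) * (∫ s in (0:ℝ)..r, fderiv ℝ u (s, 0) (0, 1)) +
          (1 / r) * (∫ s in (0:ℝ)..r, fderiv ℝ u (0, s) (1, 0))) r := by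
  obtain ⟨hC2, hlap⟩ := hu
  intro r hr
  obtain ⟨hr0, hrR⟩ := hr
  have hπ : (0:ℝ) ≤ Real.pi / 2 := by positivity
  set K : Set (ℝ × ℝ) := {p : ℝ × ℝ | 0 ≤ p.1 ∧ 0 ≤ p.2 ∧ p.1 ^ 2 + p.2 ^ 2 ≤ R ^ 2} with hKdef
  have hKc : IsCompact K := by
    apply (isCompact_closedBall (0 : ℝ × ℝ) R).of_isClosed_subset
    · exact (isClosed_le continuous_const continuous_fst).inter
        ((isClosed_le continuous_const continuous_snd).inter
          (isClosed_le (by fun_prop : Continuous fun p : ℝ × ℝ => p.1 ^ 2 + p.2 ^ 2)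
            continuous_const))
    · rintro p ⟨h1, h2, h3⟩
      rw [Metric.mem_closedBall, dist_zero_right, Prod.norm_def]
      refine max_le ?_ ?_ <;> rw [Real.norm_eq_abs, abs_le] <;>
        constructor <;> nlinarith [sq_nonneg p.1, sq_nonneg p.2]
  obtain ⟨ε₀, hε₀, hVU⟩ := hKc.exists_thickening_subset_open hUopen hsub
  set V : Set (ℝ × ℝ) := Metric.thickening ε₀ K with hVdef
  have hVopen : IsOpen V := Metric.isOpen_thickening
  have hKV : K ⊆ V := Metric.self_subset_thickening hε₀ K
  have huV : ContDiffOn ℝ 2 u V := hC2.mono hVU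
  -- membership of circular and axis points
  have hmemK : ∀ ρ ∈ Set.Icc (0:ℝ) R, ∀ θ ∈ Set.Icc (0:ℝ) (Real.pi / 2), Pt ρ θ ∈ K := by
    rintro ρ ⟨h0, hR'⟩ θ ⟨ht0, ht1⟩
    have hc : 0 ≤ Real.cos θ :=
      Real.cos_nonneg_of_mem_Icc ⟨by linarith [Real.pi_pos], ht1⟩
    have hs : 0 ≤ Real.sin θ :=
      Real.sin_nonneg_of_nonneg_of_le_pi ht0 (by linarith [Real.pi_pos])
    refine ⟨mul_nonneg h0 hc, mul_nonneg h0 hs, ?_⟩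
    have hpy := Real.sin_sq_add_cos_sq θ
    show (ρ * Real.cos θ) ^ 2 + (ρ * Real.sin θ) ^ 2 ≤ R ^ 2
    nlinarith [sq_nonneg ρ]
  have hmemX : ∀ s ∈ Set.Icc (0:ℝ) R, ((s, 0) : ℝ × ℝ) ∈ K := by
    rintro s ⟨h0, hR'⟩
    exact ⟨h0, le_refl 0, by show s ^ 2 + (0:ℝ) ^ 2 ≤ R ^ 2; nlinarith⟩
  have hmemY : ∀ s ∈ Set.Icc (0:ℝ) R, ((0, s) : ℝ × ℝ) ∈ K := by
    rintro s ⟨h0, hR'⟩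
    exact ⟨le_refl 0, h0, by show (0:ℝ) ^ 2 + s ^ 2 ≤ R ^ 2; nlinarith⟩
  -- differentiability infrastructure on V
  have hdiffAt : ∀ p ∈ V, HasFDerivAt u (fderiv ℝ u p) p := fun p hp =>
    (((huV p hp).contDiffAt (hVopen.mem_nhds hp)).differentiableAt two_ne_zero).hasFDerivAt
  have hf'C1 : ContDiffOn ℝ 1 (fderiv ℝ u) V := huV.fderiv_of_isOpen hVopen (by norm_num)
  have hf''At : ∀ p ∈ V, HasFDerivAt (fderiv ℝ u) (fderiv ℝ (fderiv ℝ u) p) p := fun p hp =>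
    (((hf'C1 p hp).contDiffAt (hVopen.mem_nhds hp)).differentiableAt one_ne_zero).hasFDerivAt
  have hcontu : ContinuousOn u V := huV.continuousOn
  have hcontf' : ContinuousOn (fderiv ℝ u) V := hf'C1.continuousOn
  have hcontf'' : ContinuousOn (fderiv ℝ (fderiv ℝ u)) V :=
    hf'C1.continuousOn_fderiv_of_isOpen hVopen le_rfl
  -- laplacian in terms of the second derivative
  have hlap' : ∀ p ∈ V,
      fderiv ℝ (fderiv ℝ u) p (1, 0) (1, 0) + fderiv ℝ (fderiv ℝ u) p (0, 1) (0, 1) = 0 := by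
    intro p hp
    have h1 : ∀ w : ℝ × ℝ, fderiv ℝ (fun q => fderiv ℝ u q w) p
        = (ContinuousLinearMap.apply ℝ ℝ w).comp (fderiv ℝ (fderiv ℝ u) p) :=
      fun w => (((ContinuousLinearMap.apply ℝ ℝ w).hasFDerivAt).comp p (hf''At p hp)).fderiv
    have h2 := hlap p (hVU hp)
    unfold laplacian at h2
    rw [h1 (1, 0), h1 (0, 1)] at h2
    simpa using h2
  -- paths
  have path1 : ∀ (θ x : ℝ), HasDerivAt (fun y => Pt y θ) (Real.cos θ, Real.sin θ) x :=
    fun θ x => (hasDerivAt_mul_const _).prodMk (hasDerivAt_mul_const _)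
  have path2 : ∀ (ρ θ : ℝ), HasDerivAt (fun t => Pt ρ t) (ρ * -Real.sin θ, ρ * Real.cos θ) θ :=
    fun ρ θ => ((Real.hasDerivAt_cos θ).const_mul ρ).prodMk ((Real.hasDerivAt_sin θ).const_mul ρ)
  have hDu : ∀ (x θ : ℝ), Pt x θ ∈ V → HasDerivAt (fun y => u (Pt y θ)) (Afun u x θ) x :=
    fun x θ hm => (hdiffAt _ hm).comp_hasDerivAt x (path1 θ x)
  have hDf' : ∀ (x θ : ℝ), Pt x θ ∈ V → HasDerivAt (fun y => fderiv ℝ u (Pt y θ))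
      (fderiv ℝ (fderiv ℝ u) (Pt x θ) (Real.cos θ, Real.sin θ)) x :=
    fun x θ hm => (hf''At _ hm).comp_hasDerivAt x (path1 θ x)
  have hDW : ∀ (x θ : ℝ), Pt x θ ∈ V → HasDerivAt (fun y => Wfun u y θ) (W'fun u x θ) x := by
    intro x θ hm
    have hA : HasDerivAt (fun y => Afun u y θ)
        (fderiv ℝ (fderiv ℝ u) (Pt x θ) (Real.cos θ, Real.sin θ) (Real.cos θ, Real.sin θ)) x := by
      have := (hDf' x θ hm).clm_apply (hasDerivAt_const x ((Real.cos θ, Real.sin θ) : ℝ × ℝ))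
      simpa [Afun] using this
    have := (hasDerivAt_id x).fun_mul hA
    simpa [Wfun, W'fun] using this
  have hDh : ∀ (ρ θ : ℝ), Pt ρ θ ∈ V →
      HasDerivAt (fun t => hfun u ρ t) (-(W'fun u ρ θ)) θ := by
    intro ρ θ hm
    have h1 : HasDerivAt (fun t => fderiv ℝ u (Pt ρ t))
        (fderiv ℝ (fderiv ℝ u) (Pt ρ θ) (ρ * -Real.sin θ, ρ * Real.cos θ)) θ :=
      (hf''At _ hm).comp_hasDerivAt θ (path2 ρ θ)
    have h2 : HasDerivAt (fun t => ((-Real.sin t, Real.cos t) : ℝ × ℝ))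
        (-Real.cos θ, -Real.sin θ) θ :=
      ((Real.hasDerivAt_sin θ).neg).prodMk (Real.hasDerivAt_cos θ)
    have h3 := h1.clm_apply h2
    have h5 : -(W'fun u ρ θ)
        = fderiv ℝ (fderiv ℝ u) (Pt ρ θ) (ρ * -Real.sin θ, ρ * Real.cos θ)
            (-Real.sin θ, Real.cos θ)
          + fderiv ℝ u (Pt ρ θ) (-Real.cos θ, -Real.sin θ) := by
      simp only [W'fun, Afun]
      exact (key_identity _ _ _ _ _ (hlap' _ hm)).symm
    rw [h5]
    exact h3
  -- continuity
  have contPt : ∀ x : ℝ, Continuous (fun θ => Pt x θ) := fun x => by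
    simp only [Pt]; fun_prop
  have hmapsV : ∀ x ∈ Set.Icc (0:ℝ) R,
      Set.MapsTo (fun θ => Pt x θ) (Set.Icc (0:ℝ) (Real.pi / 2)) V :=
    fun x hx θ hθ => hKV (hmemK x hx θ hθ)
  have contcs : Continuous (fun θ : ℝ => ((Real.cos θ, Real.sin θ) : ℝ × ℝ)) := by fun_prop
  have contuP : ∀ x ∈ Set.Icc (0:ℝ) R,
      ContinuousOn (fun θ => u (Pt x θ)) (Set.Icc (0:ℝ) (Real.pi / 2)) :=
    fun x hx => hcontu.comp (contPt x).continuousOn (hmapsV x hx)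
  have contf'P : ∀ x ∈ Set.Icc (0:ℝ) R,
      ContinuousOn (fun θ => fderiv ℝ u (Pt x θ)) (Set.Icc (0:ℝ) (Real.pi / 2)) :=
    fun x hx => hcontf'.comp (contPt x).continuousOn (hmapsV x hx)
  have contf''P : ∀ x ∈ Set.Icc (0:ℝ) R,
      ContinuousOn (fun θ => fderiv ℝ (fderiv ℝ u) (Pt x θ)) (Set.Icc (0:ℝ) (Real.pi / 2)) :=
    fun x hx => hcontf''.comp (contPt x).continuousOn (hmapsV x hx)
  have contA : ∀ x ∈ Set.Icc (0:ℝ) R,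
      ContinuousOn (fun θ => Afun u x θ) (Set.Icc (0:ℝ) (Real.pi / 2)) :=
    fun x hx => (contf'P x hx).clm_apply contcs.continuousOn
  have contW' : ∀ x ∈ Set.Icc (0:ℝ) R,
      ContinuousOn (fun θ => W'fun u x θ) (Set.Icc (0:ℝ) (Real.pi / 2)) :=
    fun x hx => (contA x hx).add (continuousOn_const.mul
      (((contf''P x hx).clm_apply contcs.continuousOn).clm_apply contcs.continuousOn))
  -- bounds
  obtain ⟨C₁, hC₁⟩ := hKc.exists_bound_of_continuousOn (hcontf'.mono hKV)
  obtain ⟨C₂, hC₂⟩ := hKc.exists_bound_of_continuousOn (f := fderiv ℝ (fderiv ℝ u)) (hcontf''.mono hKV)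
  set M₁ := max C₁ 0 with hM₁def
  set M₂ := max C₂ 0 with hM₂def
  have hM₁0 : 0 ≤ M₁ := le_max_right _ _
  have hM₂0 : 0 ≤ M₂ := le_max_right _ _
  have hvec : ∀ θ : ℝ, ‖((Real.cos θ, Real.sin θ) : ℝ × ℝ)‖ ≤ 1 := by
    intro θ
    rw [Prod.norm_def]
    simp only [Real.norm_eq_abs]
    exact max_le (Real.abs_cos_le_one θ) (Real.abs_sin_le_one θ)
  have boundA : ∀ x ∈ Set.Icc (0:ℝ) R, ∀ θ ∈ Set.Icc (0:ℝ) (Real.pi / 2),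
      |Afun u x θ| ≤ M₁ := by
    intro x hx θ hθ
    have h1 : ‖fderiv ℝ u (Pt x θ)‖ ≤ M₁ := (hC₁ _ (hmemK x hx θ hθ)).trans (le_max_left _ _)
    calc |Afun u x θ| ≤ ‖fderiv ℝ u (Pt x θ)‖ * ‖((Real.cos θ, Real.sin θ) : ℝ × ℝ)‖ :=
          (fderiv ℝ u (Pt x θ)).le_opNorm _
      _ ≤ M₁ * 1 := mul_le_mul h1 (hvec θ) (norm_nonneg _) hM₁0
      _ = M₁ := mul_one _
  have boundB : ∀ x ∈ Set.Icc (0:ℝ) R, ∀ θ ∈ Set.Icc (0:ℝ) (Real.pi / 2),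
      |fderiv ℝ (fderiv ℝ u) (Pt x θ) (Real.cos θ, Real.sin θ) (Real.cos θ, Real.sin θ)| ≤ M₂ := by
    intro x hx θ hθ
    have h1 : ‖fderiv ℝ (fderiv ℝ u) (Pt x θ)‖ ≤ M₂ :=
      (hC₂ _ (hmemK x hx θ hθ)).trans (le_max_left _ _)
    rw [← Real.norm_eq_abs]
    calc ‖fderiv ℝ (fderiv ℝ u) (Pt x θ) (Real.cos θ, Real.sin θ) (Real.cos θ, Real.sin θ)‖
        ≤ ‖fderiv ℝ (fderiv ℝ u) (Pt x θ)‖ * ‖((Real.cos θ, Real.sin θ) : ℝ × ℝ)‖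
            * ‖((Real.cos θ, Real.sin θ) : ℝ × ℝ)‖ :=
          ContinuousLinearMap.le_opNorm₂ _ _ _
      _ ≤ M₂ * 1 * 1 := by
          refine mul_le_mul (mul_le_mul h1 (hvec θ) (norm_nonneg _) hM₂0) (hvec θ)
            (norm_nonneg _) ?_
          positivity
      _ = M₂ := by ring
  have boundW' : ∀ x ∈ Set.Icc (0:ℝ) R, ∀ θ ∈ Set.Icc (0:ℝ) (Real.pi / 2),
      |W'fun u x θ| ≤ M₁ + R * M₂ := by
    intro x hx θ hθ
    have h1 : |W'fun u x θ| ≤ |Afun u x θ|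
        + |x| * |fderiv ℝ (fderiv ℝ u) (Pt x θ) (Real.cos θ, Real.sin θ)
            (Real.cos θ, Real.sin θ)| := by
      rw [show W'fun u x θ = Afun u x θ + x * fderiv ℝ (fderiv ℝ u) (Pt x θ)
        (Real.cos θ, Real.sin θ) (Real.cos θ, Real.sin θ) from rfl]
      calc |Afun u x θ + x * _| ≤ |Afun u x θ| + |x * _| := abs_add_le _ _
        _ = _ := by rw [abs_mul]
    have h2 : |x| ≤ R := by
      rw [abs_of_nonneg hx.1]; exact hx.2
    have h3 := boundA x hx θ hθ
    have h4 := boundB x hx θ hθ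
    calc |W'fun u x θ| ≤ |Afun u x θ| + |x| * |_| := h1
      _ ≤ M₁ + R * M₂ := by
          have := mul_le_mul h2 h4 (abs_nonneg _) hR.le
          linarith
  -- first differentiation under the integral sign : the derivative of Av
  have hεr : 0 < min r (R - r) := lt_min hr0 (by linarith)
  have hball : ∀ x ∈ Metric.ball r (min r (R - r)), x ∈ Set.Icc (0:ℝ) R := by
    intro x hx
    rw [Metric.mem_ball, Real.dist_eq, abs_lt] at hx
    have h1 := min_le_left r (R - r); have h2 := min_le_right r (R - r)
    exact ⟨by linarith [hx.1], by linarith [hx.2]⟩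
  have hrI : r ∈ Set.Icc (0:ℝ) R := ⟨hr0.le, hrR.le⟩
  have hAv : HasDerivAt (fun r' : ℝ => ∫ θ in (0:ℝ)..(Real.pi / 2), u (Pt r' θ))
      (∫ θ in (0:ℝ)..(Real.pi / 2), Afun u r θ) r := by
    apply hasDerivAt_param_integral (F := fun x θ => u (Pt x θ)) (F' := fun x θ => Afun u x θ)
      (C := M₁) hεr hπ
    · intro x hx; exact contuP x (hball x hx)
    · exact contA r hrI
    · intro x hx θ hθ; exact boundA x (hball x hx) θ hθ
    · intro θ hθ x hx; exact hDu x θ (hKV (hmemK x (hball x hx) θ hθ))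
  -- derivative of the flux g
  have hgderiv : ∀ ρ ∈ Set.Ioo (0:ℝ) R, HasDerivAt (gfun u)
      (fderiv ℝ u (ρ, 0) (0, 1) + fderiv ℝ u (0, ρ) (1, 0)) ρ := by
    intro ρ hρ
    have hερ : 0 < min ρ (R - ρ) := lt_min hρ.1 (by linarith [hρ.2])
    have hballρ : ∀ x ∈ Metric.ball ρ (min ρ (R - ρ)), x ∈ Set.Icc (0:ℝ) R := by
      intro x hx
      rw [Metric.mem_ball, Real.dist_eq, abs_lt] at hx
      have h1 := min_le_left ρ (R - ρ); have h2 := min_le_right ρ (R - ρ)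
      exact ⟨by linarith [hx.1], by linarith [hx.2]⟩
    have hρI : ρ ∈ Set.Icc (0:ℝ) R := ⟨hρ.1.le, hρ.2.le⟩
    have contWx : ∀ x ∈ Set.Icc (0:ℝ) R,
        ContinuousOn (fun θ => Wfun u x θ) (Set.Icc (0:ℝ) (Real.pi / 2)) :=
      fun x hx => continuousOn_const.mul (contA x hx)
    have h1 : HasDerivAt (gfun u) (∫ θ in (0:ℝ)..(Real.pi / 2), W'fun u ρ θ) ρ := by
      apply hasDerivAt_param_integral (F := fun x θ => Wfun u x θ)
        (F' := fun x θ => W'fun u x θ) (C := M₁ + R * M₂) hερ hπ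
      · intro x hx; exact contWx x (hballρ x hx)
      · exact contW' ρ hρI
      · intro x hx θ hθ; exact boundW' x (hballρ x hx) θ hθ
      · intro θ hθ x hx; exact hDW x θ (hKV (hmemK x (hballρ x hx) θ hθ))
    have h2 : ∫ θ in (0:ℝ)..(Real.pi / 2), -(W'fun u ρ θ)
        = hfun u ρ (Real.pi / 2) - hfun u ρ 0 := by
      apply intervalIntegral.integral_eq_sub_of_hasDerivAt
      · intro t ht
        rw [Set.uIcc_of_le hπ] at ht
        exact hDh ρ t (hKV (hmemK ρ hρI t ht))
      · apply ContinuousOn.intervalIntegrable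
        rw [Set.uIcc_of_le hπ]
        exact (contW' ρ hρI).neg
    rw [intervalIntegral.integral_neg] at h2
    have h4 : hfun u ρ 0 = fderiv ℝ u (ρ, 0) (0, 1) := by
      simp [hfun, Pt]
    have h5 : hfun u ρ (Real.pi / 2) = -(fderiv ℝ u (0, ρ) (1, 0)) := by
      have he : hfun u ρ (Real.pi / 2) = fderiv ℝ u (0, ρ) (-1, 0) := by
        simp [hfun, Pt]
      rw [he, lin_expand]; ring
    have h6 : (∫ θ in (0:ℝ)..(Real.pi / 2), W'fun u ρ θ)
        = fderiv ℝ u (ρ, 0) (0, 1) + fderiv ℝ u (0, ρ) (1, 0) := by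
      have h7 : (∫ θ in (0:ℝ)..(Real.pi / 2), W'fun u ρ θ)
          = hfun u ρ 0 - hfun u ρ (Real.pi / 2) := by linarith [h2]
      rw [h7, h4, h5]; ring
    rwa [h6] at h1
  -- integrability of the boundary terms
  have hIccR : Set.Icc (0:ℝ) r ⊆ Set.Icc (0:ℝ) R := Set.Icc_subset_Icc le_rfl hrR.le
  have cont1 : ContinuousOn (fun s : ℝ => fderiv ℝ u (s, 0) (0, 1)) (Set.Icc (0:ℝ) R) :=
    (hcontf'.comp (Continuous.continuousOn (by fun_prop : Continuous fun s : ℝ => ((s, 0) : ℝ × ℝ)))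
      (fun s hs => hKV (hmemX s hs))).clm_apply continuousOn_const
  have cont2 : ContinuousOn (fun s : ℝ => fderiv ℝ u (0, s) (1, 0)) (Set.Icc (0:ℝ) R) :=
    (hcontf'.comp (Continuous.continuousOn (by fun_prop : Continuous fun s : ℝ => ((0, s) : ℝ × ℝ)))
      (fun s hs => hKV (hmemY s hs))).clm_apply continuousOn_const
  have hint1 : IntervalIntegrable (fun s : ℝ => fderiv ℝ u (s, 0) (0, 1)) volume 0 r := by
    apply ContinuousOn.intervalIntegrable
    rw [Set.uIcc_of_le hr0.le]; exact cont1.mono hIccR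
  have hint2 : IntervalIntegrable (fun s : ℝ => fderiv ℝ u (0, s) (1, 0)) volume 0 r := by
    apply ContinuousOn.intervalIntegrable
    rw [Set.uIcc_of_le hr0.le]; exact cont2.mono hIccR
  have hintgd : IntervalIntegrable
      (fun s : ℝ => fderiv ℝ u (s, 0) (0, 1) + fderiv ℝ u (0, s) (1, 0)) volume 0 r :=
    hint1.add hint2
  -- FTC on [ρ₀, r]
  have hftc : ∀ ρ₀ ∈ Set.Ioo (0:ℝ) r,
      (∫ s in ρ₀..r, (fderiv ℝ u (s, 0) (0, 1) + fderiv ℝ u (0, s) (1, 0)))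
        = gfun u r - gfun u ρ₀ := by
    intro ρ₀ hρ₀
    apply intervalIntegral.integral_eq_sub_of_hasDerivAt
    · intro t ht
      rw [Set.uIcc_of_le hρ₀.2.le] at ht
      exact hgderiv t ⟨lt_of_lt_of_le hρ₀.1 ht.1, lt_of_le_of_lt ht.2 hrR⟩
    · apply hintgd.mono_set
      rw [Set.uIcc_of_le hρ₀.2.le, Set.uIcc_of_le hr0.le]
      exact Set.Icc_subset_Icc hρ₀.1.le le_rfl
  have hsplit : ∀ ρ₀ ∈ Set.Ioo (0:ℝ) r,
      (∫ s in ρ₀..r, (fderiv ℝ u (s, 0) (0, 1) + fderiv ℝ u (0, s) (1, 0)))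
        = (∫ s in (0:ℝ)..r, (fderiv ℝ u (s, 0) (0, 1) + fderiv ℝ u (0, s) (1, 0)))
          - ∫ s in (0:ℝ)..ρ₀, (fderiv ℝ u (s, 0) (0, 1) + fderiv ℝ u (0, s) (1, 0)) := by
    intro ρ₀ hρ₀
    rw [eq_sub_iff_add_eq, add_comm]
    apply intervalIntegral.integral_add_adjacent_intervals
    · apply hintgd.mono_set
      rw [Set.uIcc_of_le hρ₀.1.le, Set.uIcc_of_le hr0.le]
      exact Set.Icc_subset_Icc le_rfl hρ₀.2.le
    · apply hintgd.mono_set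
      rw [Set.uIcc_of_le hρ₀.2.le, Set.uIcc_of_le hr0.le]
      exact Set.Icc_subset_Icc hρ₀.1.le le_rfl
  -- pointwise bound on the boundary integrand
  have hnorm10 : ‖(((1:ℝ), (0:ℝ)) : ℝ × ℝ)‖ ≤ 1 := by
    rw [Prod.norm_def]; simp
  have hnorm01 : ‖(((0:ℝ), (1:ℝ)) : ℝ × ℝ)‖ ≤ 1 := by
    rw [Prod.norm_def]; simp
  have boundgd : ∀ s ∈ Set.Icc (0:ℝ) R,
      |fderiv ℝ u (s, 0) (0, 1) + fderiv ℝ u (0, s) (1, 0)| ≤ 2 * M₁ := by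
    intro s hs
    have h1 : |fderiv ℝ u (s, 0) (0, 1)| ≤ M₁ := by
      calc |fderiv ℝ u (s, 0) (0, 1)| ≤ ‖fderiv ℝ u (s, 0)‖ * ‖(((0:ℝ), (1:ℝ)) : ℝ × ℝ)‖ :=
            (fderiv ℝ u (s, 0)).le_opNorm _
        _ ≤ M₁ * 1 := mul_le_mul ((hC₁ _ (hmemX s hs)).trans (le_max_left _ _)) hnorm01
            (norm_nonneg _) hM₁0
        _ = M₁ := mul_one _
    have h2 : |fderiv ℝ u (0, s) (1, 0)| ≤ M₁ := by
      calc |fderiv ℝ u (0, s) (1, 0)| ≤ ‖fderiv ℝ u (0, s)‖ * ‖(((1:ℝ), (0:ℝ)) : ℝ × ℝ)‖ :=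
            (fderiv ℝ u (0, s)).le_opNorm _
        _ ≤ M₁ * 1 := mul_le_mul ((hC₁ _ (hmemY s hs)).trans (le_max_left _ _)) hnorm10
            (norm_nonneg _) hM₁0
        _ = M₁ := mul_one _
    calc |_| ≤ |fderiv ℝ u (s, 0) (0, 1)| + |fderiv ℝ u (0, s) (1, 0)| := abs_add_le _ _
      _ ≤ 2 * M₁ := by linarith
  -- the error bound
  have hbd : ∀ ρ₀ ∈ Set.Ioo (0:ℝ) r,
      |gfun u r - ∫ s in (0:ℝ)..r, (fderiv ℝ u (s, 0) (0, 1) + fderiv ℝ u (0, s) (1, 0))|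
        ≤ (M₁ * (Real.pi / 2) + 2 * M₁) * ρ₀ := by
    intro ρ₀ hρ₀
    have hρI : ρ₀ ∈ Set.Icc (0:ℝ) R := ⟨hρ₀.1.le, (hρ₀.2.trans hrR).le⟩
    have heq : gfun u r
        - (∫ s in (0:ℝ)..r, (fderiv ℝ u (s, 0) (0, 1) + fderiv ℝ u (0, s) (1, 0)))
        = gfun u ρ₀
          - ∫ s in (0:ℝ)..ρ₀, (fderiv ℝ u (s, 0) (0, 1) + fderiv ℝ u (0, s) (1, 0)) := by
      have ha := hftc ρ₀ hρ₀
      have hb := hsplit ρ₀ hρ₀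
      linarith
    rw [heq]
    have hg0 : |gfun u ρ₀| ≤ ρ₀ * M₁ * (Real.pi / 2) := by
      have hb1 : ∀ θ ∈ Set.uIoc (0:ℝ) (Real.pi / 2), ‖Wfun u ρ₀ θ‖ ≤ ρ₀ * M₁ := by
        intro θ hθ
        rw [Set.uIoc_of_le hπ] at hθ
        have hθ' : θ ∈ Set.Icc (0:ℝ) (Real.pi / 2) := ⟨hθ.1.le, hθ.2⟩
        rw [Real.norm_eq_abs, show Wfun u ρ₀ θ = ρ₀ * Afun u ρ₀ θ from rfl, abs_mul,
          abs_of_nonneg hρ₀.1.le]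
        exact mul_le_mul_of_nonneg_left (boundA ρ₀ hρI θ hθ') hρ₀.1.le
      have := intervalIntegral.norm_integral_le_of_norm_le_const hb1
      rw [Real.norm_eq_abs] at this
      calc |gfun u ρ₀| ≤ ρ₀ * M₁ * |Real.pi / 2 - 0| := this
        _ = ρ₀ * M₁ * (Real.pi / 2) := by rw [sub_zero, abs_of_nonneg hπ]
    have hI0 : |∫ s in (0:ℝ)..ρ₀, (fderiv ℝ u (s, 0) (0, 1) + fderiv ℝ u (0, s) (1, 0))|
        ≤ 2 * M₁ * ρ₀ := by
      have hb1 : ∀ s ∈ Set.uIoc (0:ℝ) ρ₀,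
          ‖fderiv ℝ u (s, 0) (0, 1) + fderiv ℝ u (0, s) (1, 0)‖ ≤ 2 * M₁ := by
        intro s hs
        rw [Set.uIoc_of_le hρ₀.1.le] at hs
        exact boundgd s ⟨hs.1.le, hs.2.trans (hρ₀.2.trans hrR).le⟩
      have := intervalIntegral.norm_integral_le_of_norm_le_const hb1
      rw [Real.norm_eq_abs] at this
      calc |_| ≤ 2 * M₁ * |ρ₀ - 0| := this
        _ = 2 * M₁ * ρ₀ := by rw [sub_zero, abs_of_nonneg hρ₀.1.le]
    calc |gfun u ρ₀ - ∫ s in (0:ℝ)..ρ₀, (fderiv ℝ u (s, 0) (0, 1) + fderiv ℝ u (0, s) (1, 0))|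
        ≤ |gfun u ρ₀|
          + |∫ s in (0:ℝ)..ρ₀, (fderiv ℝ u (s, 0) (0, 1) + fderiv ℝ u (0, s) (1, 0))| :=
          abs_sub _ _
      _ ≤ (M₁ * (Real.pi / 2) + 2 * M₁) * ρ₀ := by nlinarith [hg0, hI0]
  -- conclude g r = boundary integral
  have hgr : gfun u r
      = ∫ s in (0:ℝ)..r, (fderiv ℝ u (s, 0) (0, 1) + fderiv ℝ u (0, s) (1, 0)) := by
    by_contra hne
    set c := |gfun u r
      - ∫ s in (0:ℝ)..r, (fderiv ℝ u (s, 0) (0, 1) + fderiv ℝ u (0, s) (1, 0))| with hcdef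
    have hc : 0 < c := abs_pos.mpr (sub_ne_zero.mpr hne)
    set D := M₁ * (Real.pi / 2) + 2 * M₁ + 1 with hDdef
    have hD : 0 < D := by positivity
    set ρ₀ := min (r / 2) (c / (2 * D)) with hρ₀def
    have hρ₀pos : 0 < ρ₀ := lt_min (by linarith) (by positivity)
    have hρ₀mem : ρ₀ ∈ Set.Ioo (0:ℝ) r :=
      ⟨hρ₀pos, lt_of_le_of_lt (min_le_left _ _) (by linarith)⟩
    have h1 := hbd ρ₀ hρ₀mem
    have h1' : c ≤ D * ρ₀ :=
      h1.trans (mul_le_mul_of_nonneg_right (by rw [hDdef]; linarith) hρ₀pos.le)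
    have h2 : ρ₀ ≤ c / (2 * D) := min_le_right _ _
    have h3 : D * ρ₀ ≤ D * (c / (2 * D)) := mul_le_mul_of_nonneg_left h2 hD.le
    have h4 : D * (c / (2 * D)) = c / 2 := by
      field_simp
    have h6 : c ≤ c / 2 := h1'.trans (h3.trans_eq h4)
    exact absurd h6 (not_le.mpr (half_lt_self hc))
  have hsplitI : (∫ s in (0:ℝ)..r, (fderiv ℝ u (s, 0) (0, 1) + fderiv ℝ u (0, s) (1, 0)))
      = (∫ s in (0:ℝ)..r, fderiv ℝ u (s, 0) (0, 1))
        + ∫ s in (0:ℝ)..r, fderiv ℝ u (0, s) (1, 0) :=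
    intervalIntegral.integral_add hint1 hint2
  have hgr2 : gfun u r = r * ∫ θ in (0:ℝ)..(Real.pi / 2), Afun u r θ := by
    rw [show gfun u r = ∫ θ in (0:ℝ)..(Real.pi / 2), r * Afun u r θ from rfl]
    exact intervalIntegral.integral_const_mul r _
  have h7 : (∫ s in (0:ℝ)..r, fderiv ℝ u (s, 0) (0, 1))
      + (∫ s in (0:ℝ)..r, fderiv ℝ u (0, s) (1, 0))
      = r * ∫ θ in (0:ℝ)..(Real.pi / 2), Afun u r θ := by
    rw [← hsplitI, ← hgr]; exact hgr2
  have hval : (1 / r) * (∫ s in (0:ℝ)..r, fderiv ℝ u (s, 0) (0, 1))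
      + (1 / r) * (∫ s in (0:ℝ)..r, fderiv ℝ u (0, s) (1, 0))
      = ∫ θ in (0:ℝ)..(Real.pi / 2), Afun u r θ := by
    have hr' : r ≠ 0 := ne_of_gt hr0
    rw [← mul_add, h7, ← mul_assoc, one_div_mul_cancel hr', one_mul]
  rw [← hval] at hAv
  simpa only [Pt] using hAv
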